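/- The finite objects of the category iC_bif of bifinite Chu spaces (equivalently, the strongly finite objects of iC: finite objects of iC whose object and attribute sets are finite with the attribute set non-empty) have the amalgamation property: given strongly finite C, C₁, C₂ and monics φ₁ : C → C₁, φ₂ : C → C₂, there exist a strongly finite C' and monics ρ₁ : C₁ → C', ρ₂ : C₂ → C' with ρ₁ ∘ φ₁ = ρ₂ ∘ φ₂. Concretely, with A = A₁ ∩ A₂, one may take A' = A₁ ∪ A₂ and X' = {(x₁,x₂) ∈ X₁ × X₂ : φ₁⁻(x₁) = φ₂⁻(x₂)} with r'(a,(x₁,x₂)) = r₁(a,x₁) for a ∈ A₁ and r₂(a,x₂) for a ∈ A₂, and this C' is extensional. -/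

import Mathlib

universe u

/-- A Chu space over `S`: objects `A`, attributes `X`, satisfaction `r`. -/
structure ChuSpace (S : Type u) : Type (u+1) where
  A : Type u
  X : Type u
  r : A → X → S

/-- A Chu morphism `(f, g)`. -/
@[ext]
structure ChuHom {S : Type u} (C D : ChuSpace S) : Type u where
  f : C.A → D.A
  g : D.X → C.X
  comm : ∀ a y, D.r (f a) y = C.r a (g y)

variable {S : Type u}

/-- Composition of Chu morphisms: `ψ.comp φ = ψ ∘ φ`. -/
def ChuHom.comp {C D E : ChuSpace S} (ψ : ChuHom D E) (φ : ChuHom C D) : ChuHom C E where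
  f := ψ.f ∘ φ.f
  g := φ.g ∘ ψ.g
  comm := fun a y => by
    simp only [Function.comp_apply]
    rw [ψ.comm, φ.comm]

def ChuHom.idHom (C : ChuSpace S) : ChuHom C C := ⟨id, id, fun _ _ => rfl⟩

/-- `φ` is an isomorphism of Chu spaces. -/
def ChuIso {C D : ChuSpace S} (φ : ChuHom C D) : Prop :=
  ∃ ψ : ChuHom D C, φ.comp ψ = ChuHom.idHom D ∧ ψ.comp φ = ChuHom.idHom C

/-- No repeated columns. -/
def ChuExtensional (C : ChuSpace S) : Prop :=
  ∀ x y : C.X, (∀ a, C.r a x = C.r a y) → x = y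

/-- No repeated rows. -/
def ChuSeparable (C : ChuSpace S) : Prop :=
  ∀ a b : C.A, (∀ x, C.r a x = C.r b x) → a = b

def ChuBiextensional (C : ChuSpace S) : Prop := ChuExtensional C ∧ ChuSeparable C

/-- Discrete: every function `A → S` is realized by a column. -/
def ChuDiscrete (C : ChuSpace S) : Prop :=
  ∀ f : C.A → S, ∃ x : C.X, ∀ a, C.r a x = f a

/-- `φ` is monic in the full subcategory of Chu spaces satisfying `Obj`. -/
def MonicIn (Obj : ChuSpace S → Prop) {C D : ChuSpace S} (φ : ChuHom C D) : Prop :=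
  ∀ (E : ChuSpace S), Obj E → ∀ ψ₁ ψ₂ : ChuHom E C,
    φ.comp ψ₁ = φ.comp ψ₂ → ψ₁ = ψ₂

/-- Monics of the category `C` of Chu spaces: injective forward, surjective backward. -/
def IsMonoC {C D : ChuSpace S} (φ : ChuHom C D) : Prop :=
  Function.Injective φ.f ∧ Function.Surjective φ.g

/-- Monics of the categories `E` and `B`: injective forward component. -/
def IsMonoE {C D : ChuSpace S} (φ : ChuHom C D) : Prop :=
  Function.Injective φ.f

/-- An ω-sequence of Chu spaces. -/
structure ChuSeq (S : Type u) : Type (u+1) where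
  C : ℕ → ChuSpace S
  φ : ∀ i, ChuHom (C i) (C (i+1))

/-- A cocone from the ω-sequence `T` to `C`. -/
structure Cocone (T : ChuSeq S) (C : ChuSpace S) : Type u where
  ψ : ∀ i, ChuHom (T.C i) C
  compat : ∀ i, (ψ (i+1)).comp (T.φ i) = ψ i

/-- `c` is a colimit of `T` in the subcategory with objects `Obj` and morphisms `Mor`. -/
structure IsColimit (Obj : ChuSpace S → Prop)
    (Mor : ∀ C D : ChuSpace S, ChuHom C D → Prop)
    (T : ChuSeq S) (C : ChuSpace S) (c : Cocone T C) : Prop where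
  obj : Obj C
  mor : ∀ i, Mor _ _ (c.ψ i)
  univ : ∀ (C' : ChuSpace S), Obj C' → ∀ (c' : Cocone T C'), (∀ i, Mor _ _ (c'.ψ i)) →
      ∃! μ : ChuHom C C', Mor _ _ μ ∧ ∀ i, μ.comp (c.ψ i) = c'.ψ i

/-- A finite object in the subcategory `(Obj, Mor)`: every morphism into a colimit of an
ω-sequence factors through some stage. -/
def FiniteObjIn (Obj : ChuSpace S → Prop) (Mor : ∀ C D : ChuSpace S, ChuHom C D → Prop)
    (F : ChuSpace S) : Prop :=
  Obj F ∧ ∀ (T : ChuSeq S), (∀ i, Obj (T.C i)) → (∀ i, Mor _ _ (T.φ i)) →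
    ∀ (C : ChuSpace S) (c : Cocone T C), IsColimit Obj Mor T C c →
      ∀ φ : ChuHom F C, Mor _ _ φ →
        ∃ (i : ℕ) (ψ : ChuHom F (T.C i)), Mor _ _ ψ ∧ (c.ψ i).comp ψ = φ

/-- Strongly finite: a finite object of `iC` with finite object set,
finite and non-empty attribute set. -/
def StronglyFinite (F : ChuSpace S) : Prop :=
  FiniteObjIn (fun _ => True) (fun _ _ φ => IsMonoC φ) F ∧
    Finite F.A ∧ Finite F.X ∧ Nonempty F.X


namespace Stmt19Aux

variable {S : Type u}

theorem comp_assoc {C D E G : ChuSpace S} (χ : ChuHom E G) (ψ : ChuHom D E) (φ : ChuHom C D) :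
    (χ.comp ψ).comp φ = χ.comp (ψ.comp φ) := rfl

theorem isMonoC_comp {C D E : ChuSpace S} {ψ : ChuHom D E} {φ : ChuHom C D}
    (hψ : IsMonoC ψ) (hφ : IsMonoC φ) : IsMonoC (ψ.comp φ) :=
  ⟨hψ.1.comp hφ.1, hφ.2.comp hψ.2⟩

/-! ### The truncation tower used to prove extensionality of finite objects -/

def tr (n : ℕ) (p : ℕ × Bool) : ℕ × Bool := (p.1, if n ≤ p.1 then true else p.2)

theorem tr_fst (n : ℕ) (p : ℕ × Bool) : (tr n p).1 = p.1 := rfl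

theorem tr_prop (n : ℕ) (p : ℕ × Bool) : n ≤ (tr n p).1 → (tr n p).2 = true := by
  intro h
  simp only [tr] at h ⊢
  simp [h]

theorem tr_tr (n : ℕ) (p : ℕ × Bool) : tr n (tr (n+1) p) = tr n p := by
  by_cases h : n ≤ p.1
  · simp [tr, h]
  · have h' : ¬ (n+1 ≤ p.1) := by omega
    simp [tr, h, h']

theorem tr_self {n : ℕ} {p : ℕ × Bool} (h : n ≤ p.1 → p.2 = true) : tr n p = p := by
  obtain ⟨j, b⟩ := p
  by_cases h' : n ≤ j
  · simp only [tr, if_pos h']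
    exact Prod.ext rfl (h h').symm
  · simp [tr, h']

/-- The chain used to show that finite objects are extensional. -/
def extChain (F : ChuSpace S) : ChuSeq S where
  C n := ⟨F.A, F.X × {q : ULift.{u} (ℕ × Bool) // n ≤ q.down.1 → q.down.2 = true},
          fun a t => F.r a t.1⟩
  φ n := { f := id
           g := fun t => ⟨t.1, ⟨⟨tr n t.2.val.down⟩, tr_prop n _⟩⟩
           comm := fun _ _ => rfl }

def extColim (F : ChuSpace S) : ChuSpace S :=
  ⟨F.A, F.X × ULift.{u} (ℕ × Bool), fun a t => F.r a t.1⟩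

def extCocone (F : ChuSpace S) : Cocone (extChain F) (extColim F) where
  ψ n := { f := id
           g := fun t => ⟨t.1, ⟨⟨tr n t.2.down⟩, tr_prop n _⟩⟩
           comm := fun _ _ => rfl }
  compat n := by
    apply ChuHom.ext
    · rfl
    · funext t
      show (⟨t.1, ⟨⟨tr n (tr (n+1) t.2.down)⟩, _⟩⟩ :
        (extChain F).C n |>.X) = ⟨t.1, ⟨⟨tr n t.2.down⟩, _⟩⟩
      rw [Prod.mk.injEq]
      exact ⟨rfl, Subtype.ext (congrArg ULift.up (tr_tr n _))⟩

end Stmt19Aux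
namespace Stmt19Aux

variable {S : Type u}

section ColimProof

variable {F : ChuSpace S} {C' : ChuSpace S} (c' : Cocone (extChain F) C')

/-- The `X`-part. -/
def xc (n : ℕ) (y : C'.X) : F.X := ((c'.ψ n).g y).1

/-- The `(ℕ × Bool)`-part of the cocone's backward maps. -/
def qc (n : ℕ) (y : C'.X) : ℕ × Bool := ((c'.ψ n).g y).2.val.down

theorem gcompat (n : ℕ) (y : C'.X) :
    (⟨xc c' (n+1) y, ⟨⟨tr n (qc c' (n+1) y)⟩, tr_prop n _⟩⟩ : ((extChain F).C n).X)
      = (c'.ψ n).g y :=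
  congrFun (congrArg ChuHom.g (c'.compat n)) y

theorem xc_succ (n : ℕ) (y : C'.X) : xc c' (n+1) y = xc c' n y :=
  congrArg Prod.fst (gcompat c' n y)

theorem qc_succ (n : ℕ) (y : C'.X) : tr n (qc c' (n+1) y) = qc c' n y :=
  congrArg (fun t : ((extChain F).C n).X => t.2.val.down) (gcompat c' n y)

theorem xc_eq (n : ℕ) (y : C'.X) : xc c' n y = xc c' 0 y := by
  induction n with
  | zero => rfl
  | succ n ih => rw [xc_succ c' n y]; exact ih

theorem qc_fst (n : ℕ) (y : C'.X) : (qc c' n y).1 = (qc c' 0 y).1 := by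
  induction n with
  | zero => rfl
  | succ n ih => rw [← ih, ← qc_succ c' n y]; rfl

/-- The level index of `y`. -/
def Jc (y : C'.X) : ℕ := (qc c' 0 y).1

/-- The boolean of `y`. -/
def Bc (y : C'.X) : Bool := (qc c' (Jc c' y + 1) y).2

theorem qc_snd (n : ℕ) (y : C'.X) (h : Jc c' y < n) : (qc c' n y).2 = Bc c' y := by
  induction n with
  | zero => omega
  | succ n ih =>
    rcases Nat.lt_or_ge (Jc c' y) n with h' | h'
    · have h1 : (qc c' n y).2 = (qc c' (n+1) y).2 := by
        rw [← qc_succ c' n y]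
        show (if n ≤ (qc c' (n+1) y).1 then true else (qc c' (n+1) y).2) = _
        have h2 : (qc c' (n+1) y).1 = Jc c' y := qc_fst c' (n+1) y
        rw [h2, if_neg (by omega)]
      rw [← h1]; exact ih h'
    · have h2 : Jc c' y = n := by omega
      show (qc c' (n+1) y).2 = (qc c' (Jc c' y + 1) y).2
      rw [h2]

theorem qc_eq (n : ℕ) (y : C'.X) : qc c' n y = tr n (Jc c' y, Bc c' y) := by
  have h1 : (qc c' n y).1 = Jc c' y := qc_fst c' n y
  by_cases h : n ≤ Jc c' y
  · have h2 : (qc c' n y).2 = true := ((c'.ψ n).g y).2.property (by show n ≤ (qc c' n y).1; omega)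
    have h3 : tr n (Jc c' y, Bc c' y) = (Jc c' y, true) := by simp [tr, h]
    rw [h3]; exact Prod.ext h1 h2
  · have h3 : tr n (Jc c' y, Bc c' y) = (Jc c' y, Bc c' y) := by simp [tr, h]
    rw [h3]; exact Prod.ext h1 (qc_snd c' n y (by omega))

theorem fc_eq (n : ℕ) : (c'.ψ n).f = (c'.ψ 0).f := by
  induction n with
  | zero => rfl
  | succ n ih => rw [← ih]; exact congrArg ChuHom.f (c'.compat n)

/-- The mediating morphism. -/
def mediate : ChuHom (extColim F) C' where
  f := (c'.ψ 0).f
  g := fun y => ⟨xc c' 0 y, ⟨(Jc c' y, Bc c' y)⟩⟩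
  comm := fun a y => (c'.ψ 0).comm a y

end ColimProof

theorem extColim_isColimit (F : ChuSpace S) :
    IsColimit (fun _ => True) (fun _ _ φ => IsMonoC φ) (extChain F) (extColim F)
      (extCocone F) where
  obj := trivial
  mor n := by
    constructor
    · exact fun a b h => h
    · intro t
      refine ⟨⟨t.1, t.2.val⟩, ?_⟩
      show (⟨t.1, ⟨⟨tr n t.2.val.down⟩, _⟩⟩ : (extChain F).C n |>.X) = t
      have h : tr n t.2.val.down = t.2.val.down := tr_self t.2.property
      exact Prod.ext rfl (Subtype.ext (congrArg ULift.up h))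
  univ := by
    intro C' _ c' hm
    refine ⟨mediate c', ⟨⟨(hm 0).1, ?_⟩, ?_⟩, ?_⟩
    · -- surjectivity of μ.g
      intro t
      obtain ⟨xb, ⟨p⟩⟩ := t
      obtain ⟨j, b⟩ := p
      obtain ⟨y, hy⟩ := (hm (j+1)).2
        (⟨xb, ⟨⟨(j, b)⟩, fun h => ((by omega : ¬ (j + 1 ≤ j)) h).elim⟩⟩ :
          ((extChain F).C (j+1)).X)
      refine ⟨y, ?_⟩
      have e1 : xc c' (j+1) y = xb := congrArg Prod.fst hy
      have e2 : qc c' (j+1) y = (j, b) :=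
        congrArg (fun t : ((extChain F).C (j+1)).X => t.2.val.down) hy
      have hJ : Jc c' y = j := by
        have h := (qc_fst c' (j+1) y).symm
        rw [e2] at h
        exact h
      have hB : Bc c' y = b := by
        show (qc c' (Jc c' y + 1) y).2 = b
        rw [hJ, e2]
      show (⟨xc c' 0 y, ⟨(Jc c' y, Bc c' y)⟩⟩ : (extColim F).X) = ⟨xb, ⟨(j, b)⟩⟩
      rw [hJ, hB, ← xc_eq c' (j+1) y, e1]
    · -- factorization
      intro n
      apply ChuHom.ext
      · funext a
        exact (congrFun (fc_eq c' n) a).symm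
      · funext y
        show (⟨xc c' 0 y, ⟨⟨tr n (Jc c' y, Bc c' y)⟩, tr_prop n _⟩⟩ :
            ((extChain F).C n).X) = (c'.ψ n).g y
        rw [← Prod.mk.eta (p := (c'.ψ n).g y)]
        exact Prod.ext (xc_eq c' n y).symm
          (Subtype.ext (congrArg ULift.up (qc_eq c' n y).symm))
    · -- uniqueness
      rintro μ' ⟨hm', hfac⟩
      apply ChuHom.ext
      · funext a
        exact congrFun (congrArg ChuHom.f (hfac 0)) a
      · funext y
        have e : ∀ n, (⟨(μ'.g y).1, ⟨⟨tr n ((μ'.g y).2.down)⟩, tr_prop n _⟩⟩ :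
            ((extChain F).C n).X) = (c'.ψ n).g y :=
          fun n => congrFun (congrArg ChuHom.g (hfac n)) y
        have c1 : (μ'.g y).1 = xc c' 0 y := congrArg Prod.fst (e 0)
        have c2 : ∀ n, tr n ((μ'.g y).2.down) = qc c' n y :=
          fun n => congrArg (fun t : ((extChain F).C n).X => t.2.val.down) (e n)
        have j'eq : ((μ'.g y).2.down).1 = Jc c' y := by
          have h := congrArg Prod.fst (c2 0)
          exact h
        have pe : (μ'.g y).2.down = qc c' (((μ'.g y).2.down).1 + 1) y := by
          rw [← c2 (((μ'.g y).2.down).1 + 1)]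
          exact (tr_self (fun h => absurd h (by omega))).symm
        have b'eq : ((μ'.g y).2.down).2 = Bc c' y := by
          have h5 : ((μ'.g y).2.down).2 = (qc c' (((μ'.g y).2.down).1 + 1) y).2 :=
            congrArg Prod.snd pe
          rw [j'eq] at h5
          rw [h5]
          rfl
        show μ'.g y = (⟨xc c' 0 y, ⟨(Jc c' y, Bc c' y)⟩⟩ : (extColim F).X)
        have e3 : (((μ'.g y).1, ULift.up ((μ'.g y).2.down)) : (extColim F).X) = (⟨xc c' 0 y, ⟨(Jc c' y, Bc c' y)⟩⟩ : (extColim F).X) := by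
            rw [c1]
            exact Prod.ext rfl (congrArg ULift.up (Prod.ext j'eq b'eq))
        exact e3

end Stmt19Aux
namespace Stmt19Aux

variable {S : Type u}

theorem extChain_mono (F : ChuSpace S) (i : ℕ) : IsMonoC ((extChain F).φ i) := by
  constructor
  · exact fun a b h => h
  · intro t
    refine ⟨⟨t.1, ⟨t.2.val, fun h => t.2.property (by omega)⟩⟩, ?_⟩
    show (⟨t.1, ⟨⟨tr i t.2.val.down⟩, _⟩⟩ : ((extChain F).C i).X) = t
    exact Prod.ext rfl (Subtype.ext (congrArg ULift.up (tr_self t.2.property)))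

theorem finiteObj_extensional (F : ChuSpace S)
    (hF : FiniteObjIn (fun _ => True) (fun _ _ φ => IsMonoC φ) F) :
    ChuExtensional F := by
  classical
  intro x x' hxx
  by_contra hne
  have hg : ∀ (t : (extColim F).X) a,
      F.r a (if t.1 = x ∧ t.2.down.2 = false then x' else t.1) = F.r a t.1 := by
    intro t a
    split
    · next h => rw [h.1]; exact (hxx a).symm
    · rfl
  have hφm : IsMonoC (⟨id, fun t => if t.1 = x ∧ t.2.down.2 = false then x' else t.1,
      fun a t => (hg t a).symm⟩ : ChuHom F (extColim F)) := by
    constructor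
    · exact fun a b h => h
    · intro xb
      refine ⟨⟨xb, ⟨(0, true)⟩⟩, ?_⟩
      show (if xb = x ∧ (true : Bool) = false then x' else xb) = xb
      simp
  obtain ⟨i, ψ, hψm, hfac⟩ := hF.2 (extChain F) (fun _ => trivial) (extChain_mono F)
    (extColim F) (extCocone F) (extColim_isColimit F) _ hφm
  have hgeq := congrArg ChuHom.g hfac
  have e1 := congrFun hgeq (⟨x, ⟨(i, true)⟩⟩ : (extColim F).X)
  have e2 := congrFun hgeq (⟨x, ⟨(i, false)⟩⟩ : (extColim F).X)
  have key : ((extCocone F).ψ i).g ⟨x, ⟨(i, true)⟩⟩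
      = ((extCocone F).ψ i).g ⟨x, ⟨(i, false)⟩⟩ := by
    show (⟨x, ⟨⟨tr i (i, true)⟩, _⟩⟩ : ((extChain F).C i).X) = ⟨x, ⟨⟨tr i (i, false)⟩, _⟩⟩
    exact Prod.ext rfl (Subtype.ext (congrArg ULift.up (by simp [tr])))
  have contra : (if x = x ∧ (true : Bool) = false then x' else x)
      = (if x = x ∧ (false : Bool) = false then x' else x) := by
    calc (if x = x ∧ (true : Bool) = false then x' else x)
        = ψ.g (((extCocone F).ψ i).g ⟨x, ⟨(i, true)⟩⟩) := e1.symm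
      _ = ψ.g (((extCocone F).ψ i).g ⟨x, ⟨(i, false)⟩⟩) := congrArg ψ.g key
      _ = _ := e2
  simp at contra
  exact hne contra
end Stmt19Aux
namespace Stmt19Aux

theorem pushUp {S : Type u} {T : ChuSeq S} {Cc : ChuSpace S} {c : Cocone T Cc}
    (hT : ∀ i, IsMonoC (T.φ i)) {D : ChuSpace S} {φ₀ : ChuHom D Cc} {i : ℕ} (k : ℕ)
    (h : ∃ ψ : ChuHom D (T.C i), IsMonoC ψ ∧ (c.ψ i).comp ψ = φ₀) :
    ∃ ψ : ChuHom D (T.C (i + k)), IsMonoC ψ ∧ (c.ψ (i + k)).comp ψ = φ₀ := by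
  induction k with
  | zero => exact h
  | succ k ih =>
    obtain ⟨ψ, hm, hfac⟩ := ih
    refine ⟨(T.φ (i+k)).comp ψ, isMonoC_comp (hT (i+k)) hm, ?_⟩
    show (c.ψ (i+k+1)).comp ((T.φ (i+k)).comp ψ) = φ₀
    rw [← comp_assoc, c.compat (i+k), hfac]

section Main

variable {S α : Type u} {A₁ A₂ : Set α} {X X₁ X₂ : Type u}
  {r : ↥(A₁ ∩ A₂) → X → S} {r₁ : ↥A₁ → X₁ → S} {r₂ : ↥A₂ → X₂ → S}
  (φ₁ : ChuHom (⟨↥(A₁ ∩ A₂), X, r⟩ : ChuSpace S) (⟨↥A₁, X₁, r₁⟩ : ChuSpace S))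
  (φ₂ : ChuHom (⟨↥(A₁ ∩ A₂), X, r⟩ : ChuSpace S) (⟨↥A₂, X₂, r₂⟩ : ChuSpace S))

/-- The attribute function of the amalgam. -/
noncomputable def rp : ↥(A₁ ∪ A₂) → {p : X₁ × X₂ // φ₁.g p.1 = φ₂.g p.2} → S :=
  fun a p => @dite S ((a : α) ∈ A₁) (Classical.dec _) (fun h => r₁ ⟨a, h⟩ p.1.1)
    (fun h => r₂ ⟨a, (Or.resolve_left a.2 h : (a : α) ∈ A₂)⟩ p.1.2)

/-- The amalgamated Chu space. -/
noncomputable def Cam : ChuSpace S :=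
  ⟨↥(A₁ ∪ A₂), {p : X₁ × X₂ // φ₁.g p.1 = φ₂.g p.2}, rp φ₁ φ₂⟩

theorem consist (hf₁ : ∀ a, (φ₁.f a : α) = (a : α))
    (hf₂ : ∀ a, (φ₂.f a : α) = (a : α)) (a : α) (h₁ : a ∈ A₁) (h₂ : a ∈ A₂)
    (p : {p : X₁ × X₂ // φ₁.g p.1 = φ₂.g p.2}) :
    r₁ ⟨a, h₁⟩ p.1.1 = r₂ ⟨a, h₂⟩ p.1.2 := by
  have hc1 : φ₁.f ⟨a, ⟨h₁, h₂⟩⟩ = ⟨a, h₁⟩ := Subtype.ext (hf₁ _)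
  have hc2 : φ₂.f ⟨a, ⟨h₁, h₂⟩⟩ = ⟨a, h₂⟩ := Subtype.ext (hf₂ _)
  have e1 := φ₁.comm ⟨a, ⟨h₁, h₂⟩⟩ p.1.1
  have e2 := φ₂.comm ⟨a, ⟨h₁, h₂⟩⟩ p.1.2
  rw [hc1] at e1
  rw [hc2] at e2
  exact e1.trans ((congrArg (r ⟨a, ⟨h₁, h₂⟩⟩) p.2).trans e2.symm)

theorem rp_left (a : α) (h : a ∈ A₁) (p : {p : X₁ × X₂ // φ₁.g p.1 = φ₂.g p.2}) :
    rp φ₁ φ₂ ⟨a, Set.subset_union_left h⟩ p = r₁ ⟨a, h⟩ p.1.1 := by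
  unfold rp
  exact dif_pos h

theorem rp_right (hf₁ : ∀ a, (φ₁.f a : α) = (a : α))
    (hf₂ : ∀ a, (φ₂.f a : α) = (a : α)) (a : α) (h : a ∈ A₂) (p : {p : X₁ × X₂ // φ₁.g p.1 = φ₂.g p.2}) :
    rp φ₁ φ₂ ⟨a, Set.subset_union_right h⟩ p = r₂ ⟨a, h⟩ p.1.2 := by
  unfold rp
  by_cases h' : a ∈ A₁
  · rw [dif_pos h']
    exact consist φ₁ φ₂ hf₁ hf₂ a h' h p
  · rw [dif_neg h']

/-- The first inclusion into the amalgam. -/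
noncomputable def rho₁ : ChuHom (⟨↥A₁, X₁, r₁⟩ : ChuSpace S) (Cam φ₁ φ₂) where
  f := fun a => ⟨a, Or.inl a.2⟩
  g := fun p => p.1.1
  comm := fun a p => rp_left φ₁ φ₂ a a.2 p

/-- The second inclusion into the amalgam. -/
noncomputable def rho₂ (hf₁ : ∀ a, (φ₁.f a : α) = (a : α))
    (hf₂ : ∀ a, (φ₂.f a : α) = (a : α)) :
    ChuHom (⟨↥A₂, X₂, r₂⟩ : ChuSpace S) (Cam φ₁ φ₂) where
  f := fun a => ⟨a, Or.inr a.2⟩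
  g := fun p => p.1.2
  comm := fun a p => rp_right φ₁ φ₂ hf₁ hf₂ a a.2 p

theorem rho₁_mono (hφ₂ : IsMonoC φ₂) : IsMonoC (rho₁ φ₁ φ₂) := by
  constructor
  · intro a b h
    have h' := congrArg Subtype.val h
    exact Subtype.ext h'
  · intro x₁
    obtain ⟨x₂, hx₂⟩ := hφ₂.2 (φ₁.g x₁)
    exact ⟨⟨(x₁, x₂), hx₂.symm⟩, rfl⟩

theorem rho₂_mono (hf₁ : ∀ a, (φ₁.f a : α) = (a : α))
    (hf₂ : ∀ a, (φ₂.f a : α) = (a : α)) (hφ₁ : IsMonoC φ₁) : IsMonoC (rho₂ φ₁ φ₂ hf₁ hf₂) := by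
  constructor
  · intro a b h
    have h' := congrArg Subtype.val h
    exact Subtype.ext h'
  · intro x₂
    obtain ⟨x₁, hx₁⟩ := hφ₁.2 (φ₂.g x₂)
    exact ⟨⟨(x₁, x₂), hx₁⟩, rfl⟩

theorem rho_comp (hf₁ : ∀ a, (φ₁.f a : α) = (a : α))
    (hf₂ : ∀ a, (φ₂.f a : α) = (a : α)) : (rho₁ φ₁ φ₂).comp φ₁ = (rho₂ φ₁ φ₂ hf₁ hf₂).comp φ₂ := by
  apply ChuHom.ext
  · funext cc
    exact Subtype.ext ((hf₁ cc).trans (hf₂ cc).symm)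
  · funext p
    exact p.2

end Main

end Stmt19Aux
namespace Stmt19Aux

section Main2

variable {S α : Type u} {A₁ A₂ : Set α} {X X₁ X₂ : Type u}
  {r : ↥(A₁ ∩ A₂) → X → S} {r₁ : ↥A₁ → X₁ → S} {r₂ : ↥A₂ → X₂ → S}
  (φ₁ : ChuHom (⟨↥(A₁ ∩ A₂), X, r⟩ : ChuSpace S) (⟨↥A₁, X₁, r₁⟩ : ChuSpace S))
  (φ₂ : ChuHom (⟨↥(A₁ ∩ A₂), X, r⟩ : ChuSpace S) (⟨↥A₂, X₂, r₂⟩ : ChuSpace S))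

theorem Cam_ext (ext1 : ChuExtensional (⟨↥A₁, X₁, r₁⟩ : ChuSpace S))
    (ext2 : ChuExtensional (⟨↥A₂, X₂, r₂⟩ : ChuSpace S))
    (hf₁ : ∀ a, (φ₁.f a : α) = (a : α)) (hf₂ : ∀ a, (φ₂.f a : α) = (a : α)) :
    ChuExtensional (Cam φ₁ φ₂) := by
  intro p q hpq
  apply Subtype.ext
  apply Prod.ext
  · apply ext1
    intro b
    have h := hpq ⟨↑b, Or.inl b.2⟩
    have h1 := rp_left φ₁ φ₂ ↑b b.2 p
    have h2 := rp_left φ₁ φ₂ ↑b b.2 q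
    exact h1.symm.trans (h.trans h2)
  · apply ext2
    intro b
    have h := hpq ⟨↑b, Or.inr b.2⟩
    have h1 := rp_right φ₁ φ₂ hf₁ hf₂ ↑b b.2 p
    have h2 := rp_right φ₁ φ₂ hf₁ hf₂ ↑b b.2 q
    exact h1.symm.trans (h.trans h2)

theorem Cam_finiteObj (hf₁ : ∀ a, (φ₁.f a : α) = (a : α))
    (hf₂ : ∀ a, (φ₂.f a : α) = (a : α)) (hφ₁ : IsMonoC φ₁) (hφ₂ : IsMonoC φ₂)
    (h1 : FiniteObjIn (fun _ => True) (fun _ _ φ => IsMonoC φ)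
      (⟨↥A₁, X₁, r₁⟩ : ChuSpace S))
    (h2 : FiniteObjIn (fun _ => True) (fun _ _ φ => IsMonoC φ)
      (⟨↥A₂, X₂, r₂⟩ : ChuSpace S)) :
    FiniteObjIn (fun _ => True) (fun _ _ φ => IsMonoC φ) (Cam φ₁ φ₂) := by
  classical
  refine ⟨trivial, ?_⟩
  intro T _ hTmor Cc c hcol φ hφm
  obtain ⟨i₁, ψ₁, hψ₁m, hψ₁⟩ := h1.2 T (fun _ => trivial) hTmor Cc c hcol
    (φ.comp (rho₁ φ₁ φ₂)) (isMonoC_comp hφm (rho₁_mono φ₁ φ₂ hφ₂))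
  obtain ⟨i₂, ψ₂, hψ₂m, hψ₂⟩ := h2.2 T (fun _ => trivial) hTmor Cc c hcol
    (φ.comp (rho₂ φ₁ φ₂ hf₁ hf₂)) (isMonoC_comp hφm (rho₂_mono φ₁ φ₂ hf₁ hf₂ hφ₁))
  have m1 : i₁ + (max i₁ i₂ - i₁) = max i₁ i₂ := Nat.add_sub_cancel' (Nat.le_max_left _ _)
  have m2 : i₂ + (max i₁ i₂ - i₂) = max i₁ i₂ := Nat.add_sub_cancel' (Nat.le_max_right _ _)
  have H1 := pushUp hTmor (max i₁ i₂ - i₁) ⟨ψ₁, hψ₁m, hψ₁⟩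
  have H2 := pushUp hTmor (max i₁ i₂ - i₂) ⟨ψ₂, hψ₂m, hψ₂⟩
  rw [m1] at H1
  rw [m2] at H2
  obtain ⟨χ₁, hχ₁m, hχ₁⟩ := H1
  obtain ⟨χ₂, hχ₂m, hχ₂⟩ := H2
  have gf1 : ∀ z, χ₁.g ((c.ψ (max i₁ i₂)).g z) = (φ.g z).1.1 :=
    fun z => congrFun (congrArg ChuHom.g hχ₁) z
  have gf2 : ∀ z, χ₂.g ((c.ψ (max i₁ i₂)).g z) = (φ.g z).1.2 :=
    fun z => congrFun (congrArg ChuHom.g hχ₂) z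
  have ff1 : ∀ b : ↥A₁, (c.ψ (max i₁ i₂)).f (χ₁.f b) = φ.f ⟨↑b, Or.inl b.2⟩ :=
    fun b => congrFun (congrArg ChuHom.f hχ₁) b
  have ff2 : ∀ b : ↥A₂, (c.ψ (max i₁ i₂)).f (χ₂.f b) = φ.f ⟨↑b, Or.inr b.2⟩ :=
    fun b => congrFun (congrArg ChuHom.f hχ₂) b
  have gc : ∀ y, φ₁.g (χ₁.g y) = φ₂.g (χ₂.g y) := by
    intro y
    obtain ⟨z, hz⟩ := (hcol.mor (max i₁ i₂)).2 y
    rw [← hz, gf1 z, gf2 z]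
    exact (φ.g z).2
  have fkey : ∀ a : ↥(A₁ ∪ A₂),
      (c.ψ (max i₁ i₂)).f (if h : (a : α) ∈ A₁ then χ₁.f ⟨a, h⟩
        else χ₂.f ⟨a, Or.resolve_left a.2 h⟩) = φ.f a := by
    intro a
    by_cases h : (a : α) ∈ A₁
    · rw [dif_pos h, ff1 ⟨a, h⟩]
    · rw [dif_neg h, ff2 ⟨a, Or.resolve_left a.2 h⟩]
  have hcomm : ∀ (a : ↥(A₁ ∪ A₂)) y,
      (T.C (max i₁ i₂)).r (if h : (a : α) ∈ A₁ then χ₁.f ⟨a, h⟩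
        else χ₂.f ⟨a, Or.resolve_left a.2 h⟩) y
      = (Cam φ₁ φ₂).r a ⟨(χ₁.g y, χ₂.g y), gc y⟩ := by
    intro a y
    by_cases h : (a : α) ∈ A₁
    · rw [dif_pos h]
      have hc := χ₁.comm ⟨a, h⟩ y
      rw [hc]
      exact (rp_left φ₁ φ₂ a h ⟨(χ₁.g y, χ₂.g y), gc y⟩).symm
    · rw [dif_neg h]
      have hc := χ₂.comm ⟨a, Or.resolve_left a.2 h⟩ y
      rw [hc]
      exact (rp_right φ₁ φ₂ hf₁ hf₂ a (Or.resolve_left a.2 h)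
        ⟨(χ₁.g y, χ₂.g y), gc y⟩).symm
  refine ⟨max i₁ i₂,
    ⟨fun a : ↥(A₁ ∪ A₂) => if h : (a : α) ∈ A₁ then χ₁.f ⟨a, h⟩ else χ₂.f ⟨a, Or.resolve_left a.2 h⟩,
     fun y => ⟨(χ₁.g y, χ₂.g y), gc y⟩, hcomm⟩, ⟨?_, ?_⟩, ?_⟩
  · -- injectivity
    intro a b hab
    apply hφm.1
    rw [← fkey a, ← fkey b]
    exact congrArg (c.ψ (max i₁ i₂)).f hab
  · -- surjectivity
    intro p
    obtain ⟨z, hz⟩ := hφm.2 p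
    refine ⟨(c.ψ (max i₁ i₂)).g z, ?_⟩
    apply Subtype.ext
    rw [← hz]
    exact Prod.ext (gf1 z) (gf2 z)
  · -- factorization
    apply ChuHom.ext
    · funext a
      exact fkey a
    · funext z
      apply Subtype.ext
      exact Prod.ext (gf1 z) (gf2 z)

end Main2

end Stmt19Aux

/-- Amalgamation for strongly finite objects of `iC`: given strongly finite
`C = (A₁ ∩ A₂, r, X)`, `C₁ = (A₁, r₁, X₁)`, `C₂ = (A₂, r₂, X₂)` and monics
`φ₁ : C → C₁`, `φ₂ : C → C₂` whose forward components are inclusions, the space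
`C' = (A₁ ∪ A₂, r', X')` with `X' = {(x₁,x₂) : φ₁⁻ x₁ = φ₂⁻ x₂}` and `r'` restricting
to `r₁` on `A₁` and `r₂` on `A₂` is strongly finite and extensional, and the morphisms
`ρ₁ = (incl, pr₁)`, `ρ₂ = (incl, pr₂)` are monics with `ρ₁ ∘ φ₁ = ρ₂ ∘ φ₂`. -/
theorem stmt19 {S α : Type u} (A₁ A₂ : Set α) (X X₁ X₂ : Type u)
    (r : ↥(A₁ ∩ A₂) → X → S) (r₁ : ↥A₁ → X₁ → S) (r₂ : ↥A₂ → X₂ → S)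
    (hC : StronglyFinite (⟨↥(A₁ ∩ A₂), X, r⟩ : ChuSpace S))
    (hC₁ : StronglyFinite (⟨↥A₁, X₁, r₁⟩ : ChuSpace S))
    (hC₂ : StronglyFinite (⟨↥A₂, X₂, r₂⟩ : ChuSpace S))
    (φ₁ : ChuHom (⟨↥(A₁ ∩ A₂), X, r⟩ : ChuSpace S) (⟨↥A₁, X₁, r₁⟩ : ChuSpace S))
    (φ₂ : ChuHom (⟨↥(A₁ ∩ A₂), X, r⟩ : ChuSpace S) (⟨↥A₂, X₂, r₂⟩ : ChuSpace S))
    (hφ₁ : IsMonoC φ₁) (hφ₂ : IsMonoC φ₂)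
    (hf₁ : ∀ a, (φ₁.f a : α) = (a : α)) (hf₂ : ∀ a, (φ₂.f a : α) = (a : α)) :
    ∃ r' : ↥(A₁ ∪ A₂) → {p : X₁ × X₂ // φ₁.g p.1 = φ₂.g p.2} → S,
      (∀ (a : α) (h : a ∈ A₁) (p : {p : X₁ × X₂ // φ₁.g p.1 = φ₂.g p.2}),
        r' ⟨a, Set.subset_union_left h⟩ p = r₁ ⟨a, h⟩ p.1.1) ∧
      (∀ (a : α) (h : a ∈ A₂) (p : {p : X₁ × X₂ // φ₁.g p.1 = φ₂.g p.2}),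
        r' ⟨a, Set.subset_union_right h⟩ p = r₂ ⟨a, h⟩ p.1.2) ∧
      StronglyFinite (⟨↥(A₁ ∪ A₂), {p : X₁ × X₂ // φ₁.g p.1 = φ₂.g p.2}, r'⟩ :
        ChuSpace S) ∧
      ChuExtensional (⟨↥(A₁ ∪ A₂), {p : X₁ × X₂ // φ₁.g p.1 = φ₂.g p.2}, r'⟩ :
        ChuSpace S) ∧
      ∃ (ρ₁ : ChuHom (⟨↥A₁, X₁, r₁⟩ : ChuSpace S)
            (⟨↥(A₁ ∪ A₂), {p : X₁ × X₂ // φ₁.g p.1 = φ₂.g p.2}, r'⟩ : ChuSpace S))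
        (ρ₂ : ChuHom (⟨↥A₂, X₂, r₂⟩ : ChuSpace S)
            (⟨↥(A₁ ∪ A₂), {p : X₁ × X₂ // φ₁.g p.1 = φ₂.g p.2}, r'⟩ : ChuSpace S)),
        IsMonoC ρ₁ ∧ IsMonoC ρ₂ ∧ ρ₁.comp φ₁ = ρ₂.comp φ₂ ∧
        (∀ a, (ρ₁.f a : α) = (a : α)) ∧ (∀ p, ρ₁.g p = p.1.1) ∧
        (∀ a, (ρ₂.f a : α) = (a : α)) ∧ (∀ p, ρ₂.g p = p.1.2) := by
  refine ⟨Stmt19Aux.rp φ₁ φ₂, Stmt19Aux.rp_left φ₁ φ₂, Stmt19Aux.rp_right φ₁ φ₂ hf₁ hf₂,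
    ⟨Stmt19Aux.Cam_finiteObj φ₁ φ₂ hf₁ hf₂ hφ₁ hφ₂ hC₁.1 hC₂.1, ?_, ?_, ?_⟩,
    Stmt19Aux.Cam_ext φ₁ φ₂ (Stmt19Aux.finiteObj_extensional _ hC₁.1)
      (Stmt19Aux.finiteObj_extensional _ hC₂.1) hf₁ hf₂,
    Stmt19Aux.rho₁ φ₁ φ₂, Stmt19Aux.rho₂ φ₁ φ₂ hf₁ hf₂,
    Stmt19Aux.rho₁_mono φ₁ φ₂ hφ₂, Stmt19Aux.rho₂_mono φ₁ φ₂ hf₁ hf₂ hφ₁,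
    Stmt19Aux.rho_comp φ₁ φ₂ hf₁ hf₂,
    fun a => rfl, fun p => rfl, fun a => rfl, fun p => rfl⟩
  · exact Set.finite_coe_iff.mpr
      ((Set.finite_coe_iff.mp hC₁.2.1).union (Set.finite_coe_iff.mp hC₂.2.1))
  · have f1 : Finite X₁ := hC₁.2.2.1
    have f2 : Finite X₂ := hC₂.2.2.1
    exact Subtype.finite
  · obtain ⟨x₀⟩ := hC.2.2.2
    obtain ⟨x₁, hx₁⟩ := hφ₁.2 x₀
    obtain ⟨x₂, hx₂⟩ := hφ₂.2 x₀
    exact ⟨⟨(x₁, x₂), hx₁.trans hx₂.symm⟩⟩
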